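/- arXiv:2605.02786 — 4 statements merged into one kernel-verified Lean document; each statement's English description precedes it below -/
import Mathlib

section
/- For all integers m ≥ 2, r ≥ 1 and k ≥ 0, the number of NE lattice paths from (0,0) to ((m-1)k + r - 1, k) that stay weakly below the line y = x/(m-1) equals the Raney number R_{m,r}(k); equivalently, (mk + r) times this number of paths equals r · C(mk + r, k). -/
/-- A NE lattice path from `(0,0)` to `(a,b)`: a finite sequence of `a+b+1` lattice
points in `ℤ²` starting at `(0,0)`, ending at `(a,b)`, where each consecutive
difference is `E = (1,0)` or `N = (0,1)`. -/
def IsNEPath (a b : ℕ) (p : Fin (a + b + 1) → ℤ × ℤ) : Prop :=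
  p 0 = (0, 0) ∧ p (Fin.last (a + b)) = ((a : ℤ), (b : ℤ)) ∧
    ∀ i : Fin (a + b), p i.succ - p i.castSucc = (1, 0) ∨ p i.succ - p i.castSucc = (0, 1)

/-- The number of NE lattice paths from `(0,0)` to `(a,b)` that stay weakly below the
line `y = x / s`, i.e. every point `(x, y)` on the path satisfies `s * y ≤ x`. -/
noncomputable def pathCountBelow (a b s : ℕ) : ℕ :=
  Nat.card {p : Fin (a + b + 1) → ℤ × ℤ //
    IsNEPath a b p ∧ ∀ i, (s : ℤ) * (p i).2 ≤ (p i).1}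

/- step encoding -/
def stepv (x : Bool) : ℤ × ℤ := if x then (1, 0) else (0, 1)

def pathOf {n : ℕ} (d : Fin n → Bool) (i : Fin (n + 1)) : ℤ × ℤ :=
  ((List.ofFn (fun j => stepv (d j))).take i.val).sum

lemma pathOf_zero {n : ℕ} (d : Fin n → Bool) : pathOf d 0 = (0, 0) := by
  simp [pathOf, Prod.ext_iff]

lemma pathOf_succ {n : ℕ} (d : Fin n → Bool) (i : Fin n) :
    pathOf d i.succ = pathOf d i.castSucc + stepv (d i) := by
  have h : i.val < (List.ofFn (fun j => stepv (d j))).length := by simp [i.isLt]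
  have := List.sum_take_succ (List.ofFn (fun j => stepv (d j))) i.val h
  simpa [pathOf, Fin.succ, Fin.castSucc] using this

lemma pathOf_diff {n : ℕ} (d : Fin n → Bool) (i : Fin n) :
    pathOf d i.succ - pathOf d i.castSucc = stepv (d i) := by
  rw [pathOf_succ]; ring

lemma pathOf_last {n : ℕ} (d : Fin n → Bool) :
    pathOf d (Fin.last n) = ∑ j : Fin n, stepv (d j) := by
  have : ((List.ofFn (fun j => stepv (d j))).take n) = List.ofFn (fun j => stepv (d j)) := by
    apply List.take_of_length_le; simp
  rw [pathOf, Fin.last, this, List.sum_ofFn]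

def stepsOf {n : ℕ} (p : Fin (n + 1) → ℤ × ℤ) (i : Fin n) : Bool :=
  decide (p i.succ - p i.castSucc = (1, 0))

lemma stepsOf_pathOf {n : ℕ} (d : Fin n → Bool) : stepsOf (pathOf d) = d := by
  funext i
  rw [stepsOf, pathOf_diff]
  cases h : d i <;> simp [stepv, Prod.ext_iff]

lemma pathOf_stepsOf {n : ℕ} (p : Fin (n + 1) → ℤ × ℤ) (h0 : p 0 = (0, 0))
    (hd : ∀ i : Fin n, p i.succ - p i.castSucc = (1, 0) ∨ p i.succ - p i.castSucc = (0, 1)) :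
    pathOf (stepsOf p) = p := by
  funext i
  induction i using Fin.induction with
  | zero => rw [pathOf_zero, h0]
  | succ i ih =>
    rw [pathOf_succ, ih]
    rcases hd i with h | h
    · have hs : stepsOf p i = true := by simp [stepsOf, h]
      rw [hs]
      have := h; rw [sub_eq_iff_eq_add] at this; rw [this]
      simp [stepv]; ring
    · have hs : stepsOf p i = false := by
        simp only [stepsOf, decide_eq_false_iff_not]
        rw [h]; simp [Prod.ext_iff]
      rw [hs]
      have := h; rw [sub_eq_iff_eq_add] at this; rw [this]
      simp [stepv]; ring

/-- endpoint + below-line condition on a step sequence -/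
def R (a b s : ℕ) {n : ℕ} (d : Fin n → Bool) : Prop :=
  pathOf d (Fin.last n) = ((a : ℤ), (b : ℤ)) ∧
    ∀ i, (s : ℤ) * (pathOf d i).2 ≤ (pathOf d i).1

lemma count_eq (a b s : ℕ) :
    pathCountBelow a b s = Nat.card {d : Fin (a + b) → Bool // R a b s d} := by
  apply Nat.card_congr
  refine ⟨fun p => ⟨stepsOf p.1, ?_⟩, fun d => ⟨pathOf d.1, ?_⟩, ?_, ?_⟩
  · obtain ⟨⟨h0, hl, hd⟩, hb⟩ := p.2
    rw [R, pathOf_stepsOf p.1 h0 hd]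
    exact ⟨hl, hb⟩
  · obtain ⟨hl, hb⟩ := d.2
    exact ⟨⟨pathOf_zero _, hl, fun i => by rw [pathOf_diff]; cases d.1 i <;> simp [stepv]⟩, hb⟩
  · rintro ⟨p, ⟨h0, hl, hd⟩, hb⟩
    simp only [Subtype.mk.injEq]
    exact pathOf_stepsOf p h0 hd
  · rintro ⟨d, hd⟩
    simp only [Subtype.mk.injEq]
    exact stepsOf_pathOf d

lemma count_vanish (a b s : ℕ) (h : a < s * b) :
    Nat.card {d : Fin (a + b) → Bool // R a b s d} = 0 := by
  rw [Nat.card_eq_zero]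
  left
  constructor
  rintro ⟨d, hl, hb⟩
  have := hb (Fin.last (a + b))
  rw [hl] at this
  simp only at this
  have : (s : ℤ) * b ≤ a := this
  exact absurd (by exact_mod_cast this) (not_le.mpr h)

lemma pathOf_const_true {n : ℕ} (i : Fin (n + 1)) :
    pathOf (fun _ : Fin n => true) i = ((i.val : ℤ), 0) := by
  rw [pathOf]
  simp only [stepv, if_pos rfl]
  rw [List.ofFn_const, List.take_replicate, List.sum_replicate]
  have : min i.val n = i.val := min_eq_left (by omega)
  rw [this]
  simp [Prod.ext_iff]

lemma count_base (a s : ℕ) : pathCountBelow a 0 s = 1 := by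
  rw [count_eq, Nat.card_eq_one_iff_unique]
  constructor
  · constructor
    rintro ⟨d, hl, -⟩ ⟨e, he, -⟩
    have key : ∀ (f : Fin (a + 0) → Bool), pathOf f (Fin.last (a+0)) = ((a:ℤ), (0:ℤ)) →
        f = fun _ => true := by
      intro f hf
      have h2 : (pathOf f (Fin.last (a+0))).2 = 0 := by rw [hf]
      rw [pathOf_last, Prod.snd_sum] at h2
      have hall : ∀ j ∈ Finset.univ, (stepv (f j)).2 = 0 := by
        rw [← Finset.sum_eq_zero_iff_of_nonneg]
        · exact h2
        · intro j _; cases f j <;> simp [stepv]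
      funext j
      have := hall j (Finset.mem_univ j)
      cases hj : f j
      · rw [hj] at this; simp [stepv] at this
      · rfl
    refine Subtype.ext (show d = e from ?_)
    rw [key d hl, key e he]
  · refine ⟨⟨fun _ => true, ?_, ?_⟩⟩
    · rw [pathOf_const_true]; simp
    · intro i; rw [pathOf_const_true]; simp [Fin.is_le']

lemma ofFn_snoc {n : ℕ} (e : Fin n → Bool) (x : Bool) :
    List.ofFn (fun j : Fin (n+1) => stepv ((Fin.snoc e x : Fin (n+1) → Bool) j)) =
      (List.ofFn fun j : Fin n => stepv (e j)) ++ [stepv x] := by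
  rw [List.ofFn_succ']
  simp only [Fin.snoc_castSucc, Fin.snoc_last, List.concat_eq_append]

lemma pathOf_snoc_castSucc {n : ℕ} (e : Fin n → Bool) (x : Bool) (i : Fin (n + 1)) :
    pathOf (Fin.snoc e x) (Fin.castSucc i) = pathOf e i := by
  rw [pathOf, pathOf, ofFn_snoc]
  rw [List.take_append_of_le_length (by simp [Fin.is_le])]
  rfl

lemma pathOf_snoc_last {n : ℕ} (e : Fin n → Bool) (x : Bool) :
    pathOf (Fin.snoc e x) (Fin.last (n + 1)) = pathOf e (Fin.last n) + stepv x := by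
  rw [pathOf, pathOf, ofFn_snoc]
  rw [List.take_of_length_le (by simp), List.take_of_length_le (by simp),
    List.sum_append, List.sum_cons, List.sum_nil, add_zero]

def boolSplit {α : Type*} (P : α → Bool → Prop) :
    {q : α × Bool // P q.1 q.2} ≃ {e // P e true} ⊕ {e // P e false} where
  toFun := fun ⟨⟨e, x⟩, h⟩ => match x, h with
    | true, h => Sum.inl ⟨e, h⟩
    | false, h => Sum.inr ⟨e, h⟩
  invFun := fun q => match q with
    | Sum.inl ⟨e, h⟩ => ⟨(e, true), h⟩
    | Sum.inr ⟨e, h⟩ => ⟨(e, false), h⟩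
  left_inv := by rintro ⟨⟨e, (_|_)⟩, h⟩ <;> rfl
  right_inv := by rintro (⟨e, h⟩ | ⟨e, h⟩) <;> rfl

def snocSplit {n : ℕ} (P : (Fin (n+1) → Bool) → Prop) :
    {d : Fin (n+1) → Bool // P d} ≃
      {e : Fin n → Bool // P (Fin.snoc e true)} ⊕ {e : Fin n → Bool // P (Fin.snoc e false)} := by
  refine (Equiv.trans ?_ (boolSplit (fun e x => P (Fin.snoc e x))))
  refine ⟨fun d => ⟨(Fin.init d.1, d.1 (Fin.last n)), ?_⟩,
    fun q => ⟨Fin.snoc q.1.1 q.1.2, q.2⟩, ?_, ?_⟩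
  · simp only [Fin.snoc_init_self]; exact d.2
  · rintro ⟨d, h⟩; simp [Fin.snoc_init_self]
  · rintro ⟨⟨e, x⟩, h⟩; simp [Fin.init_snoc, Fin.snoc_last]

lemma R_snoc_true (a b s n : ℕ) (h : s * (b+1) ≤ a+1) (e : Fin n → Bool) :
    R (a+1) (b+1) s (Fin.snoc e true : Fin (n+1) → Bool) ↔ R a (b+1) s e := by
  constructor
  · rintro ⟨hl, hb⟩
    rw [pathOf_snoc_last] at hl
    refine ⟨?_, fun i => ?_⟩
    · have := hl
      simp only [stepv, if_pos rfl, Prod.ext_iff, Prod.fst_add, Prod.snd_add] at this ⊢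
      push_cast at this ⊢
      constructor <;> linarith [this.1, this.2]
    · have := hb (Fin.castSucc i)
      rwa [pathOf_snoc_castSucc] at this
  · rintro ⟨hl, hb⟩
    refine ⟨?_, fun i => ?_⟩
    · rw [pathOf_snoc_last, hl]
      simp only [stepv, if_pos rfl, Prod.ext_iff, Prod.fst_add, Prod.snd_add]
      push_cast; constructor <;> ring
    · induction i using Fin.lastCases with
      | last =>
        rw [pathOf_snoc_last, hl]
        simp only [stepv, if_pos rfl, Prod.fst_add, Prod.snd_add]
        push_cast
        have : (s : ℤ) * (b + 1) ≤ (a : ℤ) + 1 := by exact_mod_cast h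
        linarith
      | cast i =>
        rw [pathOf_snoc_castSucc]
        exact hb i

lemma R_snoc_false (a b s n : ℕ) (h : s * (b+1) ≤ a+1) (e : Fin n → Bool) :
    R (a+1) (b+1) s (Fin.snoc e false : Fin (n+1) → Bool) ↔ R (a+1) b s e := by
  constructor
  · rintro ⟨hl, hb⟩
    rw [pathOf_snoc_last] at hl
    refine ⟨?_, fun i => ?_⟩
    · have := hl
      simp only [stepv, Bool.false_eq_true, if_neg, Prod.ext_iff, Prod.fst_add,
        Prod.snd_add, if_false] at this ⊢
      push_cast at this ⊢
      constructor <;> linarith [this.1, this.2]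
    · have := hb (Fin.castSucc i)
      rwa [pathOf_snoc_castSucc] at this
  · rintro ⟨hl, hb⟩
    refine ⟨?_, fun i => ?_⟩
    · rw [pathOf_snoc_last, hl]
      simp only [stepv, Bool.false_eq_true, if_false, Prod.ext_iff, Prod.fst_add, Prod.snd_add]
      push_cast; constructor <;> ring
    · induction i using Fin.lastCases with
      | last =>
        rw [pathOf_snoc_last, hl]
        simp only [stepv, Bool.false_eq_true, if_false, Prod.fst_add, Prod.snd_add]
        push_cast
        have : (s : ℤ) * ((b : ℤ) + 1) ≤ (a : ℤ) + 1 := by exact_mod_cast h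
        linarith
      | cast i =>
        rw [pathOf_snoc_castSucc]
        exact hb i

lemma R_split (a b s n : ℕ) (h : s * (b+1) ≤ a+1) :
    Nat.card {d : Fin (n+1) → Bool // R (a+1) (b+1) s d} =
      Nat.card {e : Fin n → Bool // R a (b+1) s e} +
        Nat.card {e : Fin n → Bool // R (a+1) b s e} := by
  rw [Nat.card_congr (snocSplit _), Nat.card_sum]
  congr 1
  · exact Nat.card_congr (Equiv.subtypeEquivRight (fun e => R_snoc_true a b s n h e))
  · exact Nat.card_congr (Equiv.subtypeEquivRight (fun e => R_snoc_false a b s n h e))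

lemma Rcount_cast (a b s : ℕ) {n m : ℕ} (h : n = m) :
    Nat.card {d : Fin n → Bool // R a b s d} = Nat.card {d : Fin m → Bool // R a b s d} := by
  subst h; rfl

lemma count_rec (a b s : ℕ) (h : s * (b+1) ≤ a+1) :
    pathCountBelow (a+1) (b+1) s = pathCountBelow a (b+1) s + pathCountBelow (a+1) b s := by
  rw [count_eq, count_eq, count_eq,
    Rcount_cast (a+1) (b+1) s (show a+1+(b+1) = (a+b+1)+1 by omega),
    Rcount_cast a (b+1) s (show a+(b+1) = a+b+1 by omega),
    Rcount_cast (a+1) b s (show a+1+b = a+b+1 by omega)]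
  exact R_split a b s (a+b+1) h

lemma count_vanish' (a b s : ℕ) (h : a < s * b) : pathCountBelow a b s = 0 := by
  rw [count_eq]; exact count_vanish a b s h

lemma key (s : ℕ) (hs : 1 ≤ s) : ∀ n a b, a + b = n → s * b ≤ a →
    (a + 1) * pathCountBelow a b s = (a + 1 - s * b) * (a + b).choose b := by
  intro n
  induction n using Nat.strong_induction_on with
  | _ n ih =>
    intro a b hn hb
    cases b with
    | zero => simp [count_base]
    | succ b =>
      cases a with
      | zero =>
        exfalso
        have : 1 * (b+1) ≤ s * (b+1) := Nat.mul_le_mul_right _ hs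
        omega
      | succ a =>
        have hrec := count_rec a b s (by omega)
        have IH2 : (a+1+1) * pathCountBelow (a+1) b s = (a+1+1 - s*b) * (a+1+b).choose b :=
          ih (a+1+b) (by omega) (a+1) b rfl (by
            have h2 : s * b ≤ s * (b+1) := Nat.mul_le_mul_left _ (by omega)
            omega)
        have IH1 : (a+1) * pathCountBelow a (b+1) s = (a+1 - s*(b+1)) * (a+(b+1)).choose (b+1) := by
          rcases lt_or_ge a (s*(b+1)) with hc | hc
          · rw [count_vanish' a (b+1) s hc]
            have h0 : a + 1 - s*(b+1) = 0 := by omega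
            simp [h0]
          · exact ih (a+(b+1)) (by omega) a (b+1) rfl hc
        rw [hrec]
        have hP : (a+b+2).choose (b+1) = (a+b+1).choose b + (a+b+1).choose (b+1) :=
          Nat.choose_succ_succ (a+b+1) b
        have hI : (a+b+1).choose (b+1) * (b+1) = (a+b+1).choose b * (a+1) := by
          have := Nat.choose_succ_right_eq (a+b+1) b
          rwa [show a+b+1-b = a+1 by omega] at this
        have hC1 : a+(b+1) = a+b+1 := by omega
        have hC2 : a+1+b = a+b+1 := by omega
        have hC3 : a+1+(b+1) = a+b+2 := by omega
        rw [hC1] at IH1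
        rw [hC2] at IH2
        rw [hC3, hP]
        apply Nat.eq_of_mul_eq_mul_left (show 0 < a+1 by omega)
        have hs1 : s * (b+1) ≤ a+1+1 := by omega
        have hs2 : s * b ≤ a + 1 + 1 := by
          have h2 : s * b ≤ s * (b+1) := Nat.mul_le_mul_left _ (by omega)
          omega
        have hs3 : s * (b+1) ≤ a+1 := by omega
        zify [hs1, hs2, hs3] at IH1 IH2 ⊢
        zify at hI
        linear_combination ((a:ℤ)+2) * IH1 + ((a:ℤ)+1) * IH2 - (s:ℤ) * hI


/-- The number of NE lattice paths from `(0,0)` to `((m-1)k + r - 1, k)` staying weakly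
below `y = x/(m-1)` equals the Raney number `R_{m,r}(k) = (r/(mk+r)) C(mk+r, k)`,
stated multiplicatively. -/
theorem raney_lattice_path_count (m r k : ℕ) (hm : 2 ≤ m) (hr : 1 ≤ r) :
    (m * k + r) * pathCountBelow ((m - 1) * k + r - 1) k (m - 1) =
      r * Nat.choose (m * k + r) k := by
  have hs : 1 ≤ m - 1 := by omega
  have hmk : (m-1)*k + k = m*k := by
    have h1 : (m-1)+1 = m := by omega
    calc (m-1)*k + k = ((m-1)+1)*k := by ring
      _ = m*k := by rw [h1]
  have hle : (m-1) * k ≤ (m-1)*k + r - 1 := by omega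
  have hk := key (m-1) hs ((m-1)*k + r - 1 + k) ((m-1)*k + r - 1) k rfl hle
  rw [show (m-1)*k + r - 1 + 1 = (m-1)*k + r by omega,
    show (m-1)*k + r - (m-1)*k = r by omega,
    show (m-1)*k + r - 1 + k = m*k + r - 1 by omega] at hk
  apply Nat.eq_of_mul_eq_mul_left (show 0 < (m-1)*k + r by omega)
  calc ((m-1)*k + r) * ((m*k+r) * pathCountBelow ((m-1)*k + r - 1) k (m-1))
      = (m*k+r) * (((m-1)*k + r) * pathCountBelow ((m-1)*k + r - 1) k (m-1)) := by ring
    _ = (m*k+r) * (r * (m*k+r-1).choose k) := by rw [hk]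
    _ = r * ((m*k+r-1).choose k * (m*k+r-1+1)) := by rw [show m*k+r-1+1 = m*k+r by omega]; ring
    _ = r * ((m*k+r-1+1).choose k * (m*k+r-1+1 - k)) := by rw [Nat.choose_mul_succ_eq]
    _ = ((m-1)*k + r) * (r * (m*k+r).choose k) := by
        rw [show m*k+r-1+1 = m*k+r by omega, show m*k+r-k = (m-1)*k + r by omega]
        ring
end

section
/- For all integers m ≥ 2, r ≥ 1 and k ≥ 0, the rational number (r/(mk+r))·C(mk+r, k) is a positive integer; that is, (mk + r) divides r · C(mk + r, k), and the quotient is positive. -/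
/-- The Raney number `R_{m,r}(k) = (r/(mk+r)) C(mk+r, k)` is a positive integer:
`mk + r` divides `r * C(mk+r, k)` and the quotient is positive. -/
theorem raney_number_is_positive_integer (m r k : ℕ) (hm : 2 ≤ m) (hr : 1 ≤ r) :
    (m * k + r) ∣ r * Nat.choose (m * k + r) k ∧
      0 < r * Nat.choose (m * k + r) k / (m * k + r) := by
  have hn : 0 < m * k + r := by positivity
  have hkle : k ≤ m * k + r := le_add_right (Nat.le_mul_of_pos_left k (by omega))
  have hCpos : 0 < Nat.choose (m * k + r) k := Nat.choose_pos hkle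
  have hdvd : (m * k + r) ∣ r * Nat.choose (m * k + r) k := by
    rcases Nat.eq_zero_or_pos k with hk | hk
    · simp [hk]
    · obtain ⟨j, rfl⟩ : ∃ j, k = j + 1 := ⟨k - 1, by omega⟩
      have hN : m * (j + 1) + r - 1 + 1 = m * (j + 1) + r := by omega
      have key : (m * (j + 1) + r) * Nat.choose (m * (j + 1) + r - 1) j =
          Nat.choose (m * (j + 1) + r) (j + 1) * (j + 1) := by
        have := Nat.add_one_mul_choose_eq (m * (j + 1) + r - 1) j
        rwa [hN] at this
      rw [← Int.natCast_dvd_natCast]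
      push_cast
      have key' : ((m : ℤ) * (j + 1) + r) * (Nat.choose (m * (j + 1) + r - 1) j : ℤ) =
          (Nat.choose (m * (j + 1) + r) (j + 1) : ℤ) * (j + 1) := by exact_mod_cast key
      refine ⟨(Nat.choose (m * (j + 1) + r) (j + 1) : ℤ) -
        m * Nat.choose (m * (j + 1) + r - 1) j, ?_⟩
      nlinarith [key']
  exact ⟨hdvd, Nat.div_pos (Nat.le_of_dvd (by positivity) hdvd) hn⟩
end

section
/- For every integer k ≥ 0, the number of NE lattice paths from (0,0) to (2k, k) that stay weakly below the line y = x/2 equals the Fuss–Catalan number (1/(2k+1))·C(3k, k); equivalently, (2k+1) times this number of paths equals C(3k, k). -/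
namespace FussCatalanAux

open Finset

/-- number of `true`s among the first `j` entries of `f`. -/
def cnt {n : ℕ} (f : Fin n → Bool) (j : ℕ) : ℕ :=
  ∑ i : Fin n, if i.val < j ∧ f i = true then 1 else 0

lemma cnt_zero {n : ℕ} (f : Fin n → Bool) : cnt f 0 = 0 := by simp [cnt]

lemma cnt_succ {n : ℕ} (f : Fin n → Bool) (j : ℕ) :
    cnt f (j+1) = cnt f j + (if h : j < n then (if f ⟨j, h⟩ = true then 1 else 0) else 0) := by
  by_cases hn : j < n
  · rw [dif_pos hn]
    unfold cnt
    have h1 : ∀ i : Fin n, (if i.val < j+1 ∧ f i = true then (1:ℕ) else 0)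
        = (if i.val < j ∧ f i = true then 1 else 0)
          + (if i = (⟨j, hn⟩ : Fin n) ∧ f i = true then 1 else 0) := by
      intro i
      by_cases hf : f i = true
      · simp only [hf, and_true, Fin.ext_iff]
        split_ifs <;> omega
      · simp [hf]
    calc ∑ i : Fin n, (if i.val < j+1 ∧ f i = true then (1:ℕ) else 0)
        = ∑ i : Fin n, ((if i.val < j ∧ f i = true then 1 else 0)
            + (if i = (⟨j, hn⟩ : Fin n) ∧ f i = true then 1 else 0)) :=
          Finset.sum_congr rfl fun i _ => h1 i
      _ = _ := by
          rw [Finset.sum_add_distrib]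
          congr 1
          have h2 : ∀ i : Fin n, (if i = (⟨j, hn⟩ : Fin n) ∧ f i = true then (1:ℕ) else 0)
              = (if i = (⟨j, hn⟩ : Fin n) then (if f i = true then 1 else 0) else 0) := by
            intro i; split_ifs <;> tauto
          rw [Finset.sum_congr rfl fun i _ => h2 i, Finset.sum_ite_eq' univ]
          simp
  · rw [dif_neg hn]
    unfold cnt
    rw [add_zero]
    refine Finset.sum_congr rfl fun i _ => ?_
    have hi := i.isLt
    by_cases hf : f i = true
    · simp only [hf, and_true]; split_ifs <;> omega
    · simp [hf]

lemma cnt_le {n : ℕ} (f : Fin n → Bool) (j : ℕ) : cnt f j ≤ j := by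
  induction j with
  | zero => simp [cnt_zero]
  | succ j ih => rw [cnt_succ]; split_ifs <;> omega

lemma cnt_snoc_le {n : ℕ} (g : Fin n → Bool) (x : Bool) {j : ℕ} (hj : j ≤ n) :
    cnt (Fin.snoc g x) j = cnt g j := by
  unfold cnt
  rw [Fin.sum_univ_castSucc]
  have : ¬((Fin.last n).val < j ∧ (Fin.snoc g x : Fin (n+1) → Bool) (Fin.last n) = true) := by
    simp only [Fin.val_last]; intro h; omega
  rw [if_neg this, add_zero]
  refine Finset.sum_congr rfl fun i _ => ?_
  rw [Fin.snoc_castSucc]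
  rfl

lemma cnt_snoc_top {n : ℕ} (g : Fin n → Bool) (x : Bool) :
    cnt (Fin.snoc g x) (n+1) = cnt g n + (if x = true then 1 else 0) := by
  rw [cnt_succ, dif_pos (Nat.lt_succ_self n)]
  have h1 : (⟨n, Nat.lt_succ_self n⟩ : Fin (n+1)) = Fin.last n := rfl
  rw [h1, Fin.snoc_last, cnt_snoc_le g x le_rfl]

/-- A good step sequence: `a` E-steps total, prefixes stay weakly below the line. -/
def Good (n a : ℕ) (f : Fin n → Bool) : Prop :=
  cnt f n = a ∧ ∀ j ≤ n, 2 * j ≤ 3 * cnt f j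

/-- Number of good step sequences. -/
noncomputable def G (n a : ℕ) : ℕ := Nat.card {f : Fin n → Bool // Good n a f}

lemma good_snoc_true {n a : ℕ} (g : Fin n → Bool) :
    Good (n+1) (a+1) (Fin.snoc g true) ↔ (Good n a g ∧ 2*(n+1) ≤ 3*(a+1)) := by
  constructor
  · rintro ⟨h1, h2⟩
    rw [cnt_snoc_top] at h1
    simp only [if_true] at h1
    have h1' : cnt g n = a := by omega
    refine ⟨⟨h1', fun j hj => ?_⟩, ?_⟩
    · have := h2 j (by omega); rwa [cnt_snoc_le g true hj] at this
    · have := h2 (n+1) le_rfl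
      rw [cnt_snoc_top] at this
      simp only [if_true] at this
      omega
  · rintro ⟨⟨h1, h2⟩, h3⟩
    constructor
    · rw [cnt_snoc_top, h1]; simp
    · intro j hj
      rcases Nat.lt_succ_iff_lt_or_eq.mp (Nat.lt_succ_of_le hj) with h | h
      · have hj' : j ≤ n := by omega
        rw [cnt_snoc_le g true hj']
        exact h2 j hj'
      · subst h
        rw [cnt_snoc_top, h1]
        simp only [if_true]
        omega


lemma good_snoc_false {n a : ℕ} (g : Fin n → Bool) :
    Good (n+1) a (Fin.snoc g false) ↔ (Good n a g ∧ 2*(n+1) ≤ 3*a) := by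
  constructor
  · rintro ⟨h1, h2⟩
    rw [cnt_snoc_top] at h1
    simp only [Bool.false_eq_true, if_false, add_zero] at h1
    refine ⟨⟨h1, fun j hj => ?_⟩, ?_⟩
    · have := h2 j (by omega); rwa [cnt_snoc_le g false hj] at this
    · have := h2 (n+1) le_rfl
      rw [cnt_snoc_top] at this
      simp only [Bool.false_eq_true, if_false, add_zero] at this
      omega
  · rintro ⟨⟨h1, h2⟩, h3⟩
    constructor
    · rw [cnt_snoc_top, h1]; simp
    · intro j hj
      rcases Nat.lt_succ_iff_lt_or_eq.mp (Nat.lt_succ_of_le hj) with h | h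
      · have hj' : j ≤ n := by omega
        rw [cnt_snoc_le g false hj']
        exact h2 j hj'
      · subst h
        rw [cnt_snoc_top, h1]
        simp only [Bool.false_eq_true, if_false, add_zero]
        omega

/-- Splitting a good sequence of length `n+1` by its last step. -/
def recEquiv (n a : ℕ) (hc : 2*(n+1) ≤ 3*(a+1)) :
    {f : Fin (n+1) → Bool // Good (n+1) (a+1) f} ≃
      ({g : Fin n → Bool // Good n a g} ⊕ {g : Fin n → Bool // Good n (a+1) g}) where
  toFun f :=
    if hx : f.1 (Fin.last n) = true then
      Sum.inl ⟨Fin.init f.1, by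
        have h := f.2
        rw [← Fin.snoc_init_self f.1, hx] at h
        exact ((good_snoc_true _).mp h).1⟩
    else
      Sum.inr ⟨Fin.init f.1, by
        have h := f.2
        have hx' : f.1 (Fin.last n) = false := by simpa using hx
        rw [← Fin.snoc_init_self f.1, hx'] at h
        exact ((good_snoc_false _).mp h).1⟩
  invFun g :=
    Sum.elim
      (fun g => ⟨Fin.snoc g.1 true, (good_snoc_true g.1).mpr ⟨g.2, hc⟩⟩)
      (fun g => ⟨Fin.snoc g.1 false, (good_snoc_false g.1).mpr ⟨g.2, hc⟩⟩) g
  left_inv := by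
    rintro ⟨f, hf⟩
    by_cases hx : f (Fin.last n) = true
    · simp only [dif_pos hx, Sum.elim_inl]
      apply Subtype.ext
      simp only
      rw [← hx]
      exact Fin.snoc_init_self f
    · simp only [dif_neg hx, Sum.elim_inr]
      apply Subtype.ext
      simp only
      have hx' : f (Fin.last n) = false := by simpa using hx
      rw [← hx']
      exact Fin.snoc_init_self f
  right_inv := by
    rintro (⟨g, hg⟩ | ⟨g, hg⟩)
    · simp only [Sum.elim_inl]
      simp only [Fin.snoc_last, ↓reduceDIte]
      congr 1
      apply Subtype.ext
      simp only
      exact Fin.init_snoc _ _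
    · simp only [Sum.elim_inr]
      simp only [Fin.snoc_last, Bool.false_eq_true, ↓reduceDIte]
      congr 1
      apply Subtype.ext
      simp only
      exact Fin.init_snoc _ _

lemma G_succ (n a : ℕ) :
    G (n+1) (a+1) = if 2*(n+1) ≤ 3*(a+1) then G n a + G n (a+1) else 0 := by
  split_ifs with hc
  · rw [G, Nat.card_congr (recEquiv n a hc), Nat.card_sum]; rfl
  · have : IsEmpty {f : Fin (n+1) → Bool // Good (n+1) (a+1) f} := by
      refine ⟨fun f => hc ?_⟩
      have h1 := f.2.1
      have h2 := f.2.2 (n+1) le_rfl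
      omega
    rw [G, Nat.card_of_isEmpty]

lemma G_zero_zero : G 0 0 = 1 := by
  have h : ∀ f : Fin 0 → Bool, Good 0 0 f := by
    intro f
    constructor
    · simp [cnt]
    · intro j hj; omega
  rw [G, Nat.card_congr (Equiv.subtypeUnivEquiv h)]
  simp [Nat.card_eq_fintype_card]

lemma G_zero_succ (a : ℕ) : G 0 (a+1) = 0 := by
  have : IsEmpty {f : Fin 0 → Bool // Good 0 (a+1) f} := by
    refine ⟨fun f => ?_⟩
    have h1 := f.2.1
    simp [cnt] at h1
  rw [G, Nat.card_of_isEmpty]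

lemma G_succ_zero (n : ℕ) : G (n+1) 0 = 0 := by
  have : IsEmpty {f : Fin (n+1) → Bool // Good (n+1) 0 f} := by
    refine ⟨fun f => ?_⟩
    have h1 := f.2.1
    have h2 := f.2.2 (n+1) le_rfl
    omega
  rw [G, Nat.card_of_isEmpty]

lemma G_vanish {n a : ℕ} (h : 3*a < 2*n) : G n a = 0 := by
  have : IsEmpty {f : Fin n → Bool // Good n a f} := by
    refine ⟨fun f => ?_⟩
    have h1 := f.2.1
    have h2 := f.2.2 n le_rfl
    omega
  rw [G, Nat.card_of_isEmpty]

lemma G_big {n a : ℕ} (h : n < a) : G n a = 0 := by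
  have : IsEmpty {f : Fin n → Bool // Good n a f} := by
    refine ⟨fun f => ?_⟩
    have h1 := f.2.1
    have h2 := cnt_le f.1 n
    omega
  rw [G, Nat.card_of_isEmpty]


lemma choose_identity {n m : ℕ} (hm : m ≤ n) :
    ((n:ℤ) - m) * (n.choose m : ℤ) = ((m:ℤ) + 1) * (n.choose (m+1) : ℤ) := by
  have h := Nat.choose_succ_right_eq n m
  zify [hm] at h
  linarith

lemma key : ∀ n a : ℕ, 2*n ≤ 3*a →
    ((a:ℤ)+1) * (G n a : ℤ) = (3*(a:ℤ)+1-2*(n:ℤ)) * ((n.choose a : ℕ) : ℤ) := by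
  intro n
  induction n with
  | zero =>
    intro a _
    match a with
    | 0 => simp [G_zero_zero]
    | a+1 => simp [G_zero_succ]
  | succ n ih =>
    intro a ha
    match a with
    | 0 => exact absurd ha (by omega)
    | m+1 =>
      rw [G_succ, if_pos ha]
      by_cases hbig : n < m
      · rw [G_big hbig, G_big (by omega : n < m+1),
          Nat.choose_eq_zero_of_lt (by omega : n+1 < m+1)]
        simp
      · have hm : m ≤ n := by omega
        have IH1 := ih (m+1) (by omega)
        have E3 := choose_identity hm
        rw [Nat.choose_succ_succ]
        push_cast
        by_cases h2 : 2*n ≤ 3*m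
        · have IH0 := ih m h2
          have hne : ((m:ℤ)+1) ≠ 0 := by positivity
          apply mul_left_cancel₀ hne
          push_cast at IH0 IH1
          linear_combination ((m:ℤ)+2) * IH0 + ((m:ℤ)+1) * IH1 - 2 * E3
        · have h2n : 2*n = 3*m+1 := by omega
          have hnz : (2*(n:ℤ)) = 3*(m:ℤ)+1 := by exact_mod_cast congrArg (fun x : ℕ => (x:ℤ)) h2n
          rw [G_vanish (by omega : 3*m < 2*n)]
          have hne : ((m:ℤ)+1) ≠ 0 := by positivity
          have hC0 : (n.choose m : ℤ) = 2 * (n.choose (m+1) : ℤ) := by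
            apply mul_left_cancel₀ hne
            linear_combination 2 * E3 - (n.choose m : ℤ) * hnz
          push_cast at IH1
          linear_combination IH1 - hC0 + (n.choose m : ℤ) * hnz


/-- The path determined by a step sequence. -/
def pathOf {n : ℕ} (f : Fin n → Bool) : Fin (n+1) → ℤ × ℤ :=
  fun j => ((cnt f j.val : ℤ), (j.val : ℤ) - (cnt f j.val : ℤ))

/-- The step sequence of a path. -/
def stepsOf {n : ℕ} (p : Fin (n+1) → ℤ × ℤ) : Fin n → Bool :=
  fun i => decide (p i.succ - p i.castSucc = (1, 0))


lemma path_formula {a b : ℕ} {p : Fin (a+b+1) → ℤ × ℤ} (hp : IsNEPath a b p) :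
    ∀ (j : ℕ) (hj : j < a+b+1),
      p ⟨j, hj⟩ = ((cnt (stepsOf p) j : ℤ), (j:ℤ) - (cnt (stepsOf p) j : ℤ)) := by
  intro j
  induction j with
  | zero =>
    intro hj
    have h0 : (⟨0, hj⟩ : Fin (a+b+1)) = 0 := rfl
    rw [h0, hp.1, cnt_zero]
    simp
  | succ j ih =>
    intro hj
    have hj' : j < a+b := by omega
    have hstep := hp.2.2 ⟨j, hj'⟩
    have hcs : (⟨j, hj'⟩ : Fin (a+b)).castSucc = ⟨j, by omega⟩ := rfl
    have hsc : (⟨j, hj'⟩ : Fin (a+b)).succ = ⟨j+1, hj⟩ := rfl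
    have hprev := ih (by omega)
    rw [cnt_succ, dif_pos hj']
    rcases hstep with h | h
    · have hf : stepsOf p ⟨j, hj'⟩ = true := by
        simp only [stepsOf, decide_eq_true_eq]
        exact h
      rw [if_pos hf]
      have hpe : p ⟨j+1, hj⟩ = (1, 0) + p ⟨j, by omega⟩ := by
        rw [hcs, hsc] at h
        exact sub_eq_iff_eq_add.mp h
      rw [hpe, hprev]
      rw [Prod.ext_iff]
      constructor <;> simp <;> push_cast <;> ring
    · have hf : stepsOf p ⟨j, hj'⟩ = false := by
        simp only [stepsOf]
        rw [h]
        simp [Prod.ext_iff]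
      rw [if_neg (by simp [hf])]
      have hpe : p ⟨j+1, hj⟩ = (0, 1) + p ⟨j, by omega⟩ := by
        rw [hcs, hsc] at h
        exact sub_eq_iff_eq_add.mp h
      rw [hpe, hprev]
      rw [Prod.ext_iff]
      constructor <;> simp <;> push_cast <;> ring

lemma pathOf_spec {a b : ℕ} (f : Fin (a+b) → Bool) (hf : Good (a+b) a f) :
    IsNEPath a b (pathOf f) ∧ ∀ i, (2:ℤ) * ((pathOf f) i).2 ≤ ((pathOf f) i).1 := by
  obtain ⟨hf1, hf2⟩ := hf
  refine ⟨⟨?_, ?_, ?_⟩, ?_⟩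
  · simp [pathOf, cnt_zero]
  · simp only [pathOf, Fin.val_last, hf1]
    rw [Prod.ext_iff]
    constructor <;> simp <;> push_cast <;> ring
  · intro i
    have hi : i.val < a+b := i.isLt
    have hsc : (i.succ : Fin (a+b+1)).val = i.val + 1 := rfl
    have hcs : (i.castSucc : Fin (a+b+1)).val = i.val := rfl
    simp only [pathOf, hsc, hcs, Prod.mk_sub_mk]
    rw [cnt_succ, dif_pos hi]
    cases hfi : f i
    · right
      rw [if_neg (by simp [hfi])]
      rw [Prod.ext_iff]
      constructor <;> simp <;> push_cast <;> ring
    · left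
      rw [if_pos (by simp [hfi])]
      rw [Prod.ext_iff]
      constructor <;> simp <;> push_cast <;> ring
  · intro i
    have h1 := hf2 i.val (by omega)
    have h2 := cnt_le f i.val
    simp only [pathOf]
    omega

lemma pathCount_eq (a b : ℕ) : pathCountBelow a b 2 = G (a+b) a := by
  rw [pathCountBelow, G]
  have hcast : ((2:ℕ) : ℤ) = (2:ℤ) := by norm_num
  refine (Nat.card_congr (Equiv.ofBijective
    (fun f : {f : Fin (a+b) → Bool // Good (a+b) a f} =>
      (⟨pathOf f.1, (pathOf_spec f.1 f.2).1, by
        intro i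
        rw [hcast]
        exact (pathOf_spec f.1 f.2).2 i⟩ :
        {p : Fin (a+b+1) → ℤ × ℤ // IsNEPath a b p ∧ ∀ i, ((2:ℕ):ℤ) * (p i).2 ≤ (p i).1}))
    ⟨?_, ?_⟩)).symm
  · -- injective
    rintro ⟨f, hf⟩ ⟨g, hg⟩ hfg
    simp only [Subtype.mk.injEq] at hfg ⊢
    funext i
    have key : ∀ j : ℕ, j < a+b+1 → cnt f j = cnt g j := by
      intro j hj
      have := congrFun hfg ⟨j, hj⟩
      simp only [pathOf, Prod.ext_iff] at this
      exact_mod_cast this.1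
    have h1 := key i.val (by omega)
    have h2 := key (i.val + 1) (by omega)
    rw [cnt_succ, cnt_succ, dif_pos i.isLt, dif_pos i.isLt, h1] at h2
    cases hfi : f i <;> cases hgi : g i <;> rw [hfi, hgi] at h2 <;> simp_all
  · -- surjective
    rintro ⟨p, hp, hp2⟩
    refine ⟨⟨stepsOf p, ?_, ?_⟩, ?_⟩
    · -- cnt (stepsOf p) (a+b) = a
      have := path_formula hp (a+b) (by omega)
      have hlast : (⟨a+b, by omega⟩ : Fin (a+b+1)) = Fin.last (a+b) := rfl
      rw [hlast, hp.2.1, Prod.mk.injEq] at this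
      exact_mod_cast this.1.symm
    · intro j hj
      have hform := path_formula hp j (by omega)
      have hc := hp2 ⟨j, by omega⟩
      rw [hform] at hc
      simp only at hc
      have h2 := cnt_le (stepsOf p) j
      omega
    · apply Subtype.ext
      simp only
      funext j
      have := path_formula hp j.val j.isLt
      have hj : (⟨j.val, j.isLt⟩ : Fin (a+b+1)) = j := rfl
      rw [hj] at this
      rw [this]
      rfl

end FussCatalanAux


/-- The number of NE lattice paths from `(0,0)` to `(2k, k)` staying weakly below
`y = x/2` equals the Fuss–Catalan number `(1/(2k+1)) C(3k, k)`, stated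
multiplicatively. -/
theorem fuss_catalan_lattice_path_count (k : ℕ) :
    (2 * k + 1) * pathCountBelow (2 * k) k 2 = Nat.choose (3 * k) k := by
  have h1 : pathCountBelow (2*k) k 2 = FussCatalanAux.G (3*k) (2*k) := by
    rw [FussCatalanAux.pathCount_eq]
    congr 1
    ring
  have h2 := FussCatalanAux.key (3*k) (2*k) (by omega)
  have h3 : Nat.choose (3*k) k = Nat.choose (3*k) (2*k) := by
    have h := Nat.choose_symm (show 2*k ≤ 3*k by omega)
    rwa [show 3*k - 2*k = k by omega] at h
  have h4 : ((2*k+1 : ℕ) : ℤ) * (FussCatalanAux.G (3*k) (2*k) : ℤ)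
      = ((Nat.choose (3*k) k : ℕ) : ℤ) := by
    rw [h3]
    push_cast
    push_cast at h2
    linear_combination h2
  rw [h1]
  exact_mod_cast h4
end

section
/- For all integers p ≥ 2 and k ≥ 0, the number of NE lattice paths from (0,0) to (2pk + 2p − 1, k) that stay weakly below the line y = x/(2p) equals the Raney number R_{2p+1, 2p}(k) = (2p/((2p+1)k + 2p))·C((2p+1)k + 2p, k); equivalently, ((2p+1)k + 2p) times this number of paths equals 2p · C((2p+1)k + 2p, k). (In the paper this is the lattice-path count N_k^{(p,f=1)}(a=0,q=1) for the positive twist knot K_{p>1} ≡ L(2p−1,1,1) at framing f = 1.) -/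
namespace TwistAux
open Finset

attribute [local instance] Classical.propDecidable

def stp (s : ℕ) (b : Bool) : ℤ := if b then -(s:ℤ) else 1

def psum (s : ℕ) (u : ℕ → Bool) (t : ℕ) : ℤ := ∑ j ∈ Finset.range t, stp s (u j)

lemma psum_zero (s : ℕ) (u : ℕ → Bool) : psum s u 0 = 0 := by simp [psum]

lemma psum_succ (s : ℕ) (u : ℕ → Bool) (t : ℕ) :
    psum s u (t + 1) = psum s u t + stp s (u t) := Finset.sum_range_succ _ _

lemma stp_le_one (s : ℕ) (b : Bool) : stp s b ≤ 1 := by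
  cases b <;> simp [stp]

lemma psum_succ_le (s : ℕ) (u : ℕ → Bool) (t : ℕ) :
    psum s u (t + 1) ≤ psum s u t + 1 := by
  rw [psum_succ]; have := stp_le_one s (u t); omega

lemma psum_congr (s : ℕ) {u v : ℕ → Bool} (h : ∀ j, u j = v j) (t : ℕ) :
    psum s u t = psum s v t := by
  unfold psum; exact Finset.sum_congr rfl (fun j _ => by rw [h])

lemma psum_shift (s : ℕ) (u : ℕ → Bool) (i t : ℕ) :
    psum s u (i + t) = psum s u i + psum s (fun j => u (i + j)) t := by
  induction t with
  | zero => simp [psum_zero]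
  | succ t ih => rw [← Nat.add_assoc, psum_succ, ih, psum_succ]; ring

lemma psum_period (s n : ℕ) (u : ℕ → Bool) (hper : ∀ j, u (j + n) = u j) (t : ℕ) :
    psum s u (t + n) = psum s u t + psum s u n := by
  rw [Nat.add_comm t n, psum_shift]
  have : psum s (fun j => u (n + j)) t = psum s u t :=
    psum_congr s (fun j => by rw [Nat.add_comm n j, hper]) t
  rw [this]; ring

lemma psum_period_mul (s n : ℕ) (u : ℕ → Bool) (hper : ∀ j, u (j + n) = u j) (t q : ℕ) :
    psum s u (t + q * n) = psum s u t + q * psum s u n := by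
  induction q with
  | zero => simp
  | succ q ih =>
      have : t + (q + 1) * n = (t + q * n) + n := by ring
      rw [this, psum_period s n u hper, ih]; push_cast; ring

section Cycle

variable (s n : ℕ) (u : ℕ → Bool)

/-- discrete IVT -/
lemma ivt (c : ℤ) : ∀ t2 t1 : ℕ, t1 ≤ t2 → psum s u t1 < c → c ≤ psum s u t2 →
    ∃ t, t1 < t ∧ t ≤ t2 ∧ psum s u t = c := by
  intro t2
  induction t2 with
  | zero =>
      intro t1 h1 h2 h3
      interval_cases t1
      omega
  | succ t2 ih =>
      intro t1 h1 h2 h3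
      have ht1 : t1 ≤ t2 := by
        rcases Nat.lt_or_ge t1 (t2+1) with h | h
        · omega
        · exfalso; have : t1 = t2 + 1 := by omega
          rw [this] at h2; omega
      rcases le_or_gt c (psum s u t2) with h4 | h4
      · obtain ⟨t, ht⟩ := ih t1 ht1 h2 h4
        exact ⟨t, ht.1, by omega, ht.2.2⟩
      · have h5 := psum_succ_le s u t2
        exact ⟨t2 + 1, by omega, le_refl _, by omega⟩

variable (hs : 0 < s) (hn : 0 < n)
  (hper : ∀ j, u (j + n) = u j) (hsum : psum s u n = (s : ℤ))

include hs hn hper hsum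

lemma psum_decomp (t : ℕ) : psum s u t = psum s u (t % n) + ((t / n : ℕ) : ℤ) * s := by
  conv_lhs => rw [← Nat.mod_add_div' t n]
  rw [psum_period_mul s n u hper, hsum]

noncomputable def vmin : ℤ := (Finset.range n).inf' (Finset.nonempty_range_iff.mpr hn.ne') (psum s u)

lemma vmin_le (t : ℕ) : vmin s n u hn ≤ psum s u t := by
  have h1 : vmin s n u hn ≤ psum s u (t % n) :=
    Finset.inf'_le _ (Finset.mem_range.mpr (Nat.mod_lt t hn))
  have h2 := psum_decomp s n u hs hn hper hsum t
  have : (0:ℤ) ≤ ((t / n : ℕ) : ℤ) * s := by positivity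
  omega

lemma vmin_attained : ∃ r, psum s u r = vmin s n u hn := by
  obtain ⟨r, _, hr⟩ := Finset.exists_mem_eq_inf' (Finset.nonempty_range_iff.mpr hn.ne') (psum s u)
  exact ⟨r, hr.symm⟩

lemma psum_unbounded (t : ℕ) (B : ℤ) : ∃ t2, t ≤ t2 ∧ B ≤ psum s u t2 := by
  refine ⟨t + (B - psum s u t).toNat * n, by omega, ?_⟩
  rw [psum_period_mul s n u hper, hsum]
  have h1 : (B - psum s u t) ≤ ((B - psum s u t).toNat : ℤ) := Int.self_le_toNat _
  have h2 : ((B - psum s u t).toNat : ℤ) * 1 ≤ ((B - psum s u t).toNat : ℤ) * s := by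
    apply mul_le_mul_of_nonneg_left _ (by positivity)
    exact_mod_cast hs
  omega

lemma psum_eventually_big (c : ℤ) : ∃ B, ∀ t, B ≤ t → c < psum s u t := by
  refine ⟨((c - vmin s n u hn).toNat + 1) * n, fun t ht => ?_⟩
  have hq : (c - vmin s n u hn).toNat + 1 ≤ t / n := Nat.le_div_iff_mul_le hn |>.mpr ht
  have h2 := psum_decomp s n u hs hn hper hsum t
  have h3 : vmin s n u hn ≤ psum s u (t % n) := vmin_le s n u hs hn hper hsum _
  have h4 : ((c - vmin s n u hn).toNat + 1 : ℤ) ≤ ((t / n : ℕ) : ℤ) := by exact_mod_cast hq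
  have h5 : (c - vmin s n u hn) ≤ ((c - vmin s n u hn).toNat : ℤ) := Int.self_le_toNat _
  have h6 : (1:ℤ) ≤ s := by exact_mod_cast hs
  have h7 : ((t / n : ℕ) : ℤ) * 1 ≤ ((t / n : ℕ) : ℤ) * s :=
    mul_le_mul_of_nonneg_left h6 (by positivity)
  omega

/-- every value in `[vmin, ∞)` below any attained bound is attained -/
lemma value_attained (c : ℤ) (hc : vmin s n u hn ≤ c) : ∃ t, psum s u t = c := by
  obtain ⟨r, hr⟩ := vmin_attained s n u hs hn hper hsum
  rcases eq_or_lt_of_le hc with h | h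
  · exact ⟨r, by omega⟩
  · obtain ⟨t2, ht2, hB⟩ := psum_unbounded s n u hs hn hper hsum r c
    obtain ⟨t, _, _, ht⟩ := ivt s u c t2 r ht2 (by omega) hB
    exact ⟨t, ht⟩

/-- The cycle lemma: exactly `s` of the `n` rotations are strictly-minimal-forward. -/
theorem cycle_lemma :
    ((Finset.range n).filter (fun i => ∀ t, i < t → psum s u i < psum s u t)).card = s := by
  classical
  have key : ((Finset.range n).filter (fun i => ∀ t, i < t → psum s u i < psum s u t)).card
      = (Finset.Ico (vmin s n u hn) (vmin s n u hn + s)).card := by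
    apply Finset.card_bij (fun i _ => psum s u i)
    · -- maps into Ico
      intro i hi
      rw [Finset.mem_filter, Finset.mem_range] at hi
      obtain ⟨hin, hgood⟩ := hi
      rw [Finset.mem_Ico]
      refine ⟨vmin_le s n u hs hn hper hsum i, ?_⟩
      by_contra hcon
      push_neg at hcon
      -- psum i ≥ vmin + s; find t1 with psum t1 = psum i - s
      obtain ⟨t1, ht1⟩ := value_attained s n u hs hn hper hsum (psum s u i - s) (by omega)
      have h2 : psum s u (t1 + n) = psum s u i := by
        rw [psum_period s n u hper, hsum]; omega
      have h3 : i < t1 + n := by omega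
      have := hgood (t1 + n) h3
      omega
    · -- injective
      intro i1 h1 i2 h2 heq
      rw [Finset.mem_filter] at h1 h2
      by_contra hne
      rcases Nat.lt_or_ge i1 i2 with h | h
      · have := h1.2 i2 h; omega
      · have hlt : i2 < i1 := by omega
        have := h2.2 i1 hlt; omega
    · -- surjective
      intro c hc
      rw [Finset.mem_Ico] at hc
      obtain ⟨t1, ht1⟩ := value_attained s n u hs hn hper hsum c hc.1
      obtain ⟨B, hB⟩ := psum_eventually_big s n u hs hn hper hsum c
      have hocc : ∀ t, psum s u t = c → t < B := by
        intro t ht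
        by_contra hcon
        have := hB t (by omega)
        omega
      set P : ℕ → Prop := fun t => psum s u t = c with hP
      have hdec : DecidablePred P := fun t => inferInstanceAs (Decidable (_ = _))
      set L := Nat.findGreatest P B with hL
      have hPL : P L := Nat.findGreatest_spec (P := P) (le_of_lt (hocc t1 ht1)) ht1
      have hgood : ∀ t, L < t → psum s u L < psum s u t := by
        intro t ht
        by_contra hcon
        push_neg at hcon
        rw [hPL] at hcon
        rcases eq_or_lt_of_le hcon with h | h
        · exact absurd h (Nat.findGreatest_is_greatest (P := P) ht (le_of_lt (hocc t h)))
        · obtain ⟨t2, ht2, hB2⟩ := psum_unbounded s n u hs hn hper hsum t c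
          obtain ⟨t', h1', h2', h3'⟩ := ivt s u c t2 t ht2 h hB2
          exact absurd h3' (Nat.findGreatest_is_greatest (P := P) (by omega) (le_of_lt (hocc t' h3')))
      have hLn : L < n := by
        by_contra hcon
        push_neg at hcon
        have hdecomp : psum s u ((L - n) + n) = psum s u (L - n) + s := by
          rw [psum_period s n u hper, hsum]
        rw [Nat.sub_add_cancel hcon] at hdecomp
        have := vmin_le s n u hs hn hper hsum (L - n)
        have : psum s u L = c := hPL
        omega
      exact ⟨L, Finset.mem_filter.mpr ⟨Finset.mem_range.mpr hLn, hgood⟩, hPL⟩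
  rw [key, Int.card_Ico]
  simp

end Cycle

section Words


variable {n : ℕ}

def ext (hn : 0 < n) (w : Fin n → Bool) : ℕ → Bool := fun j => w ⟨j % n, Nat.mod_lt j hn⟩

lemma ext_period (hn : 0 < n) (w : Fin n → Bool) (j : ℕ) :
    ext hn w (j + n) = ext hn w j := by simp [ext]

lemma ext_of_lt (hn : 0 < n) (w : Fin n → Bool) {j : ℕ} (h : j < n) :
    ext hn w j = w ⟨j, h⟩ := by simp [ext, Nat.mod_eq_of_lt h]

def cnt (w : Fin n → Bool) : ℕ := (Finset.univ.filter (fun j => w j = true)).card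

lemma sum_stp (s : ℕ) (w : Fin n → Bool) :
    ∑ j : Fin n, stp s (w j) = (n : ℤ) - (s + 1) * cnt w := by
  have h : ∀ j : Fin n, stp s (w j) = 1 - (s + 1) * (if w j = true then (1:ℤ) else 0) := by
    intro j; cases hj : w j <;> simp [stp] <;> ring
  rw [Finset.sum_congr rfl (fun j _ => h j)]
  rw [Finset.sum_sub_distrib, ← Finset.mul_sum]
  have h2 : ((cnt w : ℕ) : ℤ) = ∑ j : Fin n, (if w j = true then (1:ℤ) else 0) := by
    rw [cnt, Finset.card_filter]
    push_cast
    rfl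
  simp [h2, Finset.card_univ]

lemma psum_ext_n (s : ℕ) (hn : 0 < n) (w : Fin n → Bool) :
    psum s (ext hn w) n = (n : ℤ) - (s + 1) * cnt w := by
  rw [← sum_stp s w, psum]
  rw [← Fin.sum_univ_eq_sum_range (fun j => stp s (ext hn w j)) n]
  exact Finset.sum_congr rfl (fun j _ => by rw [ext_of_lt hn w j.isLt])

def GoodWord (s : ℕ) (hn : 0 < n) (w : Fin n → Bool) : Prop :=
  ∀ t, 0 < t → t ≤ n → 1 ≤ psum s (ext hn w) t

def rot (i : Fin n) (w : Fin n → Bool) : Fin n → Bool := fun j => w (j + i)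

lemma ext_rot (hn : 0 < n) (i : Fin n) (w : Fin n → Bool) (j : ℕ) :
    ext hn (rot i w) j = ext hn w (j + i.val) := by
  simp only [ext, rot]
  congr 1
  apply Fin.ext
  simp [Fin.add_def, Nat.mod_add_mod]

end Words

section Rot
variable {n : ℕ}

lemma psum_rot (s : ℕ) (hn : 0 < n) (i : Fin n) (w : Fin n → Bool) (t : ℕ) :
    psum s (ext hn (rot i w)) t = psum s (ext hn w) (i.val + t) - psum s (ext hn w) i.val := by
  rw [psum_shift s (ext hn w) i.val t]
  have h : psum s (ext hn (rot i w)) t = psum s (fun j => ext hn w (i.val + j)) t :=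
    psum_congr s (fun j => by rw [ext_rot, Nat.add_comm]) t
  rw [h]; ring

lemma window_to_full (s : ℕ) (hn : 0 < n) (u : ℕ → Bool) (hper : ∀ j, u (j + n) = u j)
    (hsum : psum s u n = s) (i : ℕ)
    (hw : ∀ t, 0 < t → t ≤ n → psum s u i < psum s u (i + t)) :
    ∀ t, i < t → psum s u i < psum s u t := by
  intro t ht
  have hrn : (t - i - 1) % n < n := Nat.mod_lt _ hn
  have hqr : (t - i - 1) / n * n + (t - i - 1) % n = t - i - 1 := Nat.div_add_mod' _ _
  have ht' : t = (i + ((t - i - 1) % n + 1)) + (t - i - 1) / n * n := by omega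
  rw [ht', psum_period_mul s n u hper]
  have h1 := hw ((t - i - 1) % n + 1) (by omega) (by omega)
  have h2 : (0:ℤ) ≤ ((t - i - 1) / n : ℕ) * psum s u n := by rw [hsum]; positivity
  omega

lemma good_rot_iff (s : ℕ) (hn : 0 < n) (w : Fin n → Bool) (hs : 0 < s)
    (hsum : psum s (ext hn w) n = s) (i : Fin n) :
    GoodWord s hn (rot i w) ↔
      ∀ t, i.val < t → psum s (ext hn w) i.val < psum s (ext hn w) t := by
  constructor
  · intro hg
    apply window_to_full s hn (ext hn w) (ext_period hn w) hsum
    intro t h1 h2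
    have := hg t h1 h2
    rw [psum_rot s hn i w t] at this
    omega
  · intro hf t h1 h2
    rw [psum_rot s hn i w t]
    have := hf (i.val + t) (by omega)
    omega

lemma card_good_rot (s : ℕ) (hn : 0 < n) (w : Fin n → Bool) (hs : 0 < s)
    (hsum : psum s (ext hn w) n = s) :
    (Finset.univ.filter (fun i : Fin n => GoodWord s hn (rot i w))).card = s := by
  have hc := cycle_lemma s n (ext hn w) hs hn (ext_period hn w) hsum
  conv_rhs => rw [← hc]
  apply Finset.card_bij (fun (i : Fin n) _ => i.val)
  · intro i hi
    rw [Finset.mem_filter] at hi ⊢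
    exact ⟨Finset.mem_range.mpr i.isLt, (good_rot_iff s hn w hs hsum i).mp hi.2⟩
  · intro i1 h1 i2 h2 h
    exact Fin.ext h
  · intro t ht
    rw [Finset.mem_filter, Finset.mem_range] at ht
    refine ⟨⟨t, ht.1⟩, Finset.mem_filter.mpr ⟨Finset.mem_univ _, ?_⟩, rfl⟩
    exact (good_rot_iff s hn w hs hsum ⟨t, ht.1⟩).mpr ht.2

end Rot

section RotAlg
variable {n : ℕ} [NeZero n]

lemma rot_rot (i j : Fin n) (w : Fin n → Bool) : rot i (rot j w) = rot (i + j) w := by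
  funext x
  simp only [rot, add_assoc]

lemma rot_zero (w : Fin n → Bool) : rot (0 : Fin n) w = w := by
  funext x; simp [rot]

lemma rot_neg_rot (i : Fin n) (w : Fin n → Bool) : rot i (rot (-i) w) = w := by
  rw [rot_rot, add_neg_cancel, rot_zero]

lemma rot_rot_neg (i : Fin n) (w : Fin n → Bool) : rot (-i) (rot i w) = w := by
  rw [rot_rot, neg_add_cancel, rot_zero]

lemma cnt_rot (i : Fin n) (w : Fin n → Bool) : cnt (rot i w) = cnt w := by
  unfold cnt rot
  apply Finset.card_bij (fun j _ => j + i)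
  · intro j hj
    rw [Finset.mem_filter] at hj ⊢
    exact ⟨Finset.mem_univ _, hj.2⟩
  · intro j1 h1 j2 h2 h
    exact add_right_cancel h
  · intro j hj
    rw [Finset.mem_filter] at hj
    refine ⟨j - i, Finset.mem_filter.mpr ⟨Finset.mem_univ _, ?_⟩, sub_add_cancel j i⟩
    rw [sub_add_cancel]
    exact hj.2

end RotAlg

section Count
variable {n : ℕ}

lemma card_cnt_eq (k : ℕ) :
    (Finset.univ.filter (fun w : Fin n → Bool => cnt w = k)).card = Nat.choose n k := by
  rw [← Fintype.card_subtype]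
  have e : {w : Fin n → Bool // cnt w = k} ≃ {A : Finset (Fin n) // A.card = k} :=
    { toFun := fun w => ⟨Finset.univ.filter (fun j => w.1 j = true), w.2⟩
      invFun := fun A => ⟨fun j => decide (j ∈ A.1), by simpa [cnt] using A.2⟩
      left_inv := by
        intro w
        apply Subtype.ext
        funext j
        simp
      right_inv := by
        intro A
        apply Subtype.ext
        ext j
        simp }
  rw [Fintype.card_congr e]
  rw [Fintype.card_finset_len, Fintype.card_fin]

theorem main_count (s k : ℕ) (hs : 0 < s) (hnk : n = (s+1)*k + s) (hn : 0 < n) :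
    n * (Finset.univ.filter
        (fun w : Fin n → Bool => cnt w = k ∧ GoodWord s hn w)).card
      = s * Nat.choose n k := by
  haveI : NeZero n := ⟨hn.ne'⟩
  have hsum : ∀ w : Fin n → Bool, cnt w = k → psum s (ext hn w) n = s := by
    intro w hc
    rw [psum_ext_n, hc, hnk]
    push_cast
    ring
  set P : Finset ((Fin n → Bool) × Fin n) :=
    Finset.univ.filter (fun x => cnt x.1 = k ∧ GoodWord s hn (rot x.2 x.1)) with hP
  -- Step 1 : P.card = choose n k * s
  have step1 : P.card = Nat.choose n k * s := by
    have h1 : P.card = ∑ w ∈ Finset.univ, (P.filter (fun x => x.1 = w)).card :=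
      Finset.card_eq_sum_card_fiberwise (fun x _ => Finset.mem_univ x.1)
    have h2 : ∀ w : Fin n → Bool,
        (P.filter (fun x => x.1 = w)).card = if cnt w = k then s else 0 := by
      intro w
      by_cases hc : cnt w = k
      · rw [if_pos hc, ← card_good_rot s hn w hs (hsum w hc)]
        apply Finset.card_bij (fun (x : (Fin n → Bool) × Fin n) _ => x.2)
        · intro x hx
          rw [Finset.mem_filter, hP, Finset.mem_filter] at hx
          rw [Finset.mem_filter]
          refine ⟨Finset.mem_univ _, ?_⟩
          have := hx.1.2.2
          rwa [hx.2] at this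
        · intro x1 hx1 x2 hx2 h
          rw [Finset.mem_filter] at hx1 hx2
          exact Prod.ext (hx1.2.trans hx2.2.symm) h
        · intro i hi
          rw [Finset.mem_filter] at hi
          refine ⟨(w, i), Finset.mem_filter.mpr ⟨?_, rfl⟩, rfl⟩
          rw [hP, Finset.mem_filter]
          exact ⟨Finset.mem_univ _, hc, hi.2⟩
      · rw [if_neg hc, Finset.card_eq_zero]
        apply Finset.eq_empty_of_forall_notMem
        intro x hx
        rw [Finset.mem_filter, hP, Finset.mem_filter] at hx
        exact hc (hx.2 ▸ hx.1.2.1)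
    rw [h1, Finset.sum_congr rfl (fun w _ => h2 w), ← Finset.sum_filter]
    rw [Finset.sum_const, card_cnt_eq k, smul_eq_mul]
  -- Step 2 : P.card = GW.card * n
  have step2 : P.card = (Finset.univ.filter
      (fun w : Fin n → Bool => cnt w = k ∧ GoodWord s hn w)).card * n := by
    have e : P.card = ((Finset.univ.filter
        (fun w : Fin n → Bool => cnt w = k ∧ GoodWord s hn w)) ×ˢ
        (Finset.univ : Finset (Fin n))).card := by
      apply Finset.card_bij (fun (x : (Fin n → Bool) × Fin n) _ => (rot x.2 x.1, x.2))
      · intro x hx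
        rw [hP, Finset.mem_filter] at hx
        rw [Finset.mem_product, Finset.mem_filter]
        refine ⟨⟨Finset.mem_univ _, ?_, hx.2.2⟩, Finset.mem_univ _⟩
        rw [cnt_rot]
        exact hx.2.1
      · intro x1 hx1 x2 hx2 h
        rw [Prod.mk.injEq] at h
        obtain ⟨h1, h2⟩ := h
        rw [h2] at h1
        have : x1.1 = x2.1 := by
          have := congrArg (rot (-x2.2)) h1
          rwa [rot_rot_neg, rot_rot_neg] at this
        exact Prod.ext this h2
      · intro b hb
        rw [Finset.mem_product, Finset.mem_filter] at hb
        refine ⟨(rot (-b.2) b.1, b.2), ?_, ?_⟩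
        · rw [hP, Finset.mem_filter]
          refine ⟨Finset.mem_univ _, ?_, ?_⟩
          · rw [cnt_rot]; exact hb.1.2.1
          · rw [rot_neg_rot]; exact hb.1.2.2
        · rw [rot_neg_rot]
    rw [e, Finset.card_product, Finset.card_univ, Fintype.card_fin]
  rw [mul_comm, ← step2, step1, mul_comm]
end Count

section Path

def stepVec (b : Bool) : ℤ × ℤ := if b then (0, 1) else (1, 0)

def pp (u : ℕ → Bool) (t : ℕ) : ℤ × ℤ := ∑ j ∈ Finset.range t, stepVec (u j)

lemma pp_zero (u : ℕ → Bool) : pp u 0 = 0 := by simp [pp]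

lemma pp_succ (u : ℕ → Bool) (t : ℕ) : pp u (t + 1) = pp u t + stepVec (u t) :=
  Finset.sum_range_succ _ _

lemma pp_spec (s : ℕ) (u : ℕ → Bool) (t : ℕ) :
    (pp u t).1 - s * (pp u t).2 = psum s u t := by
  induction t with
  | zero => simp [pp_zero, psum_zero]
  | succ t ih =>
      rw [pp_succ, psum_succ, ← ih]
      cases u t <;> simp [stepVec, stp] <;> ring

lemma cnt_cast {m : ℕ} (w : Fin m → Bool) :
    ((cnt w : ℕ) : ℤ) = ∑ j : Fin m, (if w j = true then (1:ℤ) else 0) := by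
  rw [cnt, Finset.card_filter]
  push_cast
  rfl

lemma pp_full {m : ℕ} (hm : 0 < m) (w : Fin m → Bool) :
    pp (ext hm w) m = ((m : ℤ) - cnt w, (cnt w : ℤ)) := by
  have h : pp (ext hm w) m = ∑ j : Fin m, stepVec (w j) := by
    rw [pp, ← Fin.sum_univ_eq_sum_range (fun j => stepVec (ext hm w j)) m]
    exact Finset.sum_congr rfl (fun j _ => by rw [ext_of_lt hm w j.isLt])
  rw [h]
  have h1 : (∑ j : Fin m, stepVec (w j)).1 = ∑ j : Fin m, (stepVec (w j)).1 :=
    map_sum (AddMonoidHom.fst ℤ ℤ) _ _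
  have h2 : (∑ j : Fin m, stepVec (w j)).2 = ∑ j : Fin m, (stepVec (w j)).2 :=
    map_sum (AddMonoidHom.snd ℤ ℤ) _ _
  have e1 : ∀ j : Fin m, (stepVec (w j)).1 = 1 - (if w j = true then (1:ℤ) else 0) := by
    intro j; cases w j <;> simp [stepVec]
  have e2 : ∀ j : Fin m, (stepVec (w j)).2 = (if w j = true then (1:ℤ) else 0) := by
    intro j; cases w j <;> simp [stepVec]
  apply Prod.ext
  · rw [h1, Finset.sum_congr rfl (fun j _ => e1 j), Finset.sum_sub_distrib, ← cnt_cast]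
    simp [Finset.card_univ]
  · rw [h2, Finset.sum_congr rfl (fun j _ => e2 j), ← cnt_cast]

variable (a b : ℕ) (hL : 0 < a + b)

def wOf (p : Fin (a + b + 1) → ℤ × ℤ) : Fin (a + b) → Bool :=
  fun j => decide (p j.succ - p j.castSucc = (0, 1))

lemma fin_mk_zero : (⟨0, Nat.succ_pos _⟩ : Fin (a + b + 1)) = 0 := rfl

lemma pp_wOf (p : Fin (a + b + 1) → ℤ × ℤ) (hp : IsNEPath a b p) :
    ∀ t (ht : t ≤ a + b), pp (ext hL (wOf a b p)) t = p ⟨t, Nat.lt_succ_of_le ht⟩ := by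
  intro t
  induction t with
  | zero =>
      intro _
      rw [pp_zero, fin_mk_zero, hp.1]
      rfl
  | succ t ih =>
      intro ht
      have ht' : t < a + b := ht
      rw [pp_succ, ih (le_of_lt ht'), ext_of_lt hL _ ht']
      set i : Fin (a + b) := ⟨t, ht'⟩ with hi
      have hcs : i.castSucc = ⟨t, Nat.lt_succ_of_le (le_of_lt ht')⟩ := rfl
      have hsc : i.succ = ⟨t + 1, Nat.lt_succ_of_le ht⟩ := rfl
      have hstep := hp.2.2 i
      rcases hstep with h | h
      · have hw : wOf a b p i = false := by simp [wOf, h]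
        rw [hw]
        rw [← hcs, ← hsc, show stepVec false = (1,0) from rfl, ← h]
        ring
      · have hw : wOf a b p i = true := by simp [wOf, h]
        rw [hw]
        rw [← hcs, ← hsc, show stepVec true = (0,1) from rfl, ← h]
        ring

def toPath (w : Fin (a + b) → Bool) : Fin (a + b + 1) → ℤ × ℤ :=
  fun i => pp (ext hL w) i.val

lemma toPath_isPath (w : Fin (a + b) → Bool) (hcnt : cnt w = b) :
    IsNEPath a b (toPath a b hL w) := by
  refine ⟨by simp [toPath, pp_zero]; rfl, ?_, ?_⟩
  · show pp (ext hL w) (Fin.last (a+b)).val = _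
    rw [Fin.val_last, pp_full hL w, hcnt]
    have : ((a + b : ℕ) : ℤ) - (b : ℤ) = (a : ℤ) := by push_cast; ring
    rw [this]
  · intro i
    show pp (ext hL w) (i.val + 1) - pp (ext hL w) i.val = _ ∨
      pp (ext hL w) (i.val + 1) - pp (ext hL w) i.val = _
    rw [pp_succ, ext_of_lt hL w i.isLt]
    cases hwi : w i
    · left; show pp _ i.val + stepVec false - pp _ i.val = (1,0)
      rw [show stepVec false = (1,0) from rfl]; ring
    · right; show pp _ i.val + stepVec true - pp _ i.val = (0,1)
      rw [show stepVec true = (0,1) from rfl]; ring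

lemma card_path_eq_words (s : ℕ) :
    Nat.card {p : Fin (a + b + 1) → ℤ × ℤ //
        IsNEPath a b p ∧ ∀ i, (s : ℤ) * (p i).2 ≤ (p i).1}
      = Nat.card {w : Fin (a + b) → Bool //
          cnt w = b ∧ ∀ t, t ≤ a + b → 0 ≤ psum s (ext hL w) t} := by
  apply Nat.card_congr
  refine Equiv.symm ?_
  refine
    { toFun := fun w => ⟨toPath a b hL w.1, toPath_isPath a b hL w.1 w.2.1, ?_⟩
      invFun := fun p => ⟨wOf a b p.1, ?_, ?_⟩
      left_inv := ?_
      right_inv := ?_ }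
  · -- below the line
    intro i
    have h := w.2.2 i.val (Nat.lt_succ_iff.mp i.isLt)
    have h2 := pp_spec s (ext hL w.1) i.val
    show (s:ℤ) * (pp (ext hL w.1) i.val).2 ≤ (pp (ext hL w.1) i.val).1
    omega
  · -- cnt (wOf p) = b
    have hend := pp_wOf a b hL p.1 p.2.1 (a + b) (le_refl _)
    rw [pp_full hL] at hend
    have hlast : (⟨a + b, Nat.lt_succ_of_le (le_refl _)⟩ : Fin (a+b+1)) = Fin.last (a+b) := rfl
    rw [hlast, p.2.1.2.1] at hend
    have := congrArg Prod.snd hend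
    simp only at this
    exact_mod_cast this
  · -- prefix sums nonneg
    intro t ht
    rw [← pp_spec s (ext hL (wOf a b p.1)) t, pp_wOf a b hL p.1 p.2.1 t ht]
    have := p.2.2 ⟨t, Nat.lt_succ_of_le ht⟩
    omega
  · -- left inverse : wOf (toPath w) = w
    intro w
    apply Subtype.ext
    funext j
    show wOf a b (toPath a b hL w.1) j = w.1 j
    have : toPath a b hL w.1 j.succ - toPath a b hL w.1 j.castSucc = stepVec (w.1 j) := by
      show pp (ext hL w.1) (j.val + 1) - pp (ext hL w.1) j.val = _
      rw [pp_succ, ext_of_lt hL w.1 j.isLt]; ring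
    rw [wOf, this]
    cases hwj : w.1 j <;> simp [stepVec]
  · -- right inverse : toPath (wOf p) = p
    intro p
    apply Subtype.ext
    funext i
    show pp (ext hL (wOf a b p.1)) i.val = p.1 i
    rw [pp_wOf a b hL p.1 p.2.1 i.val (Nat.lt_succ_iff.mp i.isLt)]

end Path

section Cons
variable (s m : ℕ)

lemma psum_tail (hm : 0 < m) (w' : Fin (m + 1) → Bool) :
    ∀ t, t ≤ m → psum s (ext (Nat.succ_pos m) w') (t + 1)
      = stp s (w' 0) + psum s (ext hm (fun j => w' j.succ)) t := by
  intro t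
  induction t with
  | zero =>
      intro _
      rw [psum_zero, psum_succ, psum_zero, ext_of_lt (Nat.succ_pos m) w' (Nat.succ_pos m)]
      simp
  | succ t ih =>
      intro ht
      have ht' : t < m := ht
      rw [psum_succ, ih (le_of_lt ht'), psum_succ, ext_of_lt hm _ ht',
        ext_of_lt (Nat.succ_pos m) w' (by omega : t + 1 < m + 1)]
      have : w' ⟨t + 1, by omega⟩ = w' (⟨t, ht'⟩ : Fin m).succ := rfl
      rw [this]
      ring

lemma cnt_succ (w' : Fin (m + 1) → Bool) :
    cnt w' = (if w' 0 = true then 1 else 0) + cnt (fun j => w' j.succ) := by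
  have h : ∀ (l : ℕ) (v : Fin l → Bool), cnt v = ∑ j : Fin l, (if v j = true then 1 else 0) := by
    intro l v
    rw [cnt, Finset.card_filter]
  rw [h (m+1) w', h m (fun j => w' j.succ), Fin.sum_univ_succ]

lemma good_zero_false (hs : 0 < s) (w' : Fin (m + 1) → Bool)
    (hg : GoodWord s (Nat.succ_pos m) w') : w' 0 = false := by
  have h1 := hg 1 Nat.one_pos (by omega)
  rw [psum_succ, psum_zero, ext_of_lt (Nat.succ_pos m) w' (Nat.succ_pos m)] at h1
  have : (⟨0, Nat.succ_pos m⟩ : Fin (m+1)) = 0 := rfl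
  rw [this] at h1
  cases h : w' 0
  · rfl
  · rw [h] at h1
    simp [stp] at h1
    omega

lemma card_words_cons (hm : 0 < m) (hs : 0 < s) (k : ℕ) :
    Nat.card {w : Fin m → Bool // cnt w = k ∧ ∀ t, t ≤ m → 0 ≤ psum s (ext hm w) t}
      = Nat.card {w' : Fin (m + 1) → Bool //
          cnt w' = k ∧ GoodWord s (Nat.succ_pos m) w'} := by
  apply Nat.card_congr
  have tail_cons : ∀ w : Fin m → Bool, (fun j : Fin m => (Fin.cons false w : Fin (m+1) → Bool) j.succ) = w := by
    intro w; funext j; rw [Fin.cons_succ]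
  refine
    { toFun := fun w => ⟨(Fin.cons false w.1 : Fin (m+1) → Bool), ?_, ?_⟩
      invFun := fun w' => ⟨fun j => w'.1 j.succ, ?_, ?_⟩
      left_inv := ?_
      right_inv := ?_ }
  · rw [cnt_succ, tail_cons w.1, Fin.cons_zero]
    simpa using w.2.1
  · intro t ht0 htm
    obtain ⟨t', rfl⟩ : ∃ t', t = t' + 1 := ⟨t - 1, by omega⟩
    rw [psum_tail s m hm _ t' (by omega), tail_cons w.1, Fin.cons_zero]
    have := w.2.2 t' (by omega)
    simp only [stp, Bool.false_eq_true, if_false]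
    omega
  · have h := cnt_succ m w'.1
    rw [good_zero_false s m hs w'.1 w'.2.2] at h
    simp only [Bool.false_eq_true, if_false, Nat.zero_add] at h
    have h2 := w'.2.1
    omega
  · intro t ht
    have h := w'.2.2 (t + 1) (Nat.succ_pos t) (by omega)
    rw [psum_tail s m hm w'.1 t ht, good_zero_false s m hs w'.1 w'.2.2] at h
    simp only [stp] at h
    omega
  · intro w
    apply Subtype.ext
    exact tail_cons w.1
  · intro w'
    apply Subtype.ext
    funext j
    show (Fin.cons false (fun j => (w'.1) j.succ) : Fin (m+1) → Bool) j = w'.1 j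
    refine Fin.cases ?_ ?_ j
    · rw [Fin.cons_zero, good_zero_false s m hs w'.1 w'.2.2]
    · intro i
      rw [Fin.cons_succ]

lemma natcard_filter (s n k : ℕ) (hn : 0 < n) :
    Nat.card {w : Fin n → Bool // cnt w = k ∧ GoodWord s hn w}
      = (Finset.univ.filter (fun w : Fin n → Bool => cnt w = k ∧ GoodWord s hn w)).card := by
  rw [Nat.card_eq_fintype_card, Fintype.card_subtype]

end Cons
end TwistAux


/-- Positive twist knots `K_{p>1}` at framing `f = 1`: the number of NE lattice paths
from `(0,0)` to `(2pk + 2p - 1, k)` staying weakly below `y = x/(2p)` equals the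
Raney number `R_{2p+1, 2p}(k) = (2p/((2p+1)k + 2p)) C((2p+1)k + 2p, k)`, stated
multiplicatively. -/
theorem positive_twist_knot_framing_one_path_count (p k : ℕ) (hp : 2 ≤ p) :
    ((2 * p + 1) * k + 2 * p) * pathCountBelow (2 * p * k + 2 * p - 1) k (2 * p) =
      2 * p * Nat.choose ((2 * p + 1) * k + 2 * p) k := by
  have hs : 0 < 2 * p := by omega
  set a : ℕ := 2 * p * k + 2 * p - 1 with ha
  have hX : 0 ≤ 2 * p * k := Nat.zero_le _
  have hL : 0 < a + k := by omega
  have harith : (2 * p + 1) * k + 2 * p = a + k + 1 := by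
    have h1 : (2 * p + 1) * k = 2 * p * k + k := by ring
    omega
  have e1 : pathCountBelow a k (2 * p)
      = Nat.card {w : Fin (a + k) → Bool //
          TwistAux.cnt w = k ∧ ∀ t, t ≤ a + k → 0 ≤ TwistAux.psum (2*p) (TwistAux.ext hL w) t} :=
    TwistAux.card_path_eq_words a k hL (2 * p)
  have e2 := TwistAux.card_words_cons (2 * p) (a + k) hL hs k
  have e3 := TwistAux.natcard_filter (2 * p) (a + k + 1) k (Nat.succ_pos _)
  have e4 := TwistAux.main_count (2 * p) k hs (n := a + k + 1) harith.symm (Nat.succ_pos _)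
  rw [harith, e1, e2, e3]
  exact e4
end
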